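/- Let G be a 2-connected planar graph, C_7-free, containing a copy of T_3 with outer boundary triangle abc, and suppose G ≠ T_3. If a face f of the embedding shares the two boundary edges ab and bc with the T_3 and has length m with 4 ≤ m ≤ 7, then G contains a cycle of length 7. -/

import Mathlib

/-- `G` contains `H` as a minor: branch sets. -/
def HasGraphMinor {V : Type*} {W : Type*} (G : SimpleGraph V) (H : SimpleGraph W) : Prop :=
  ∃ B : W → Set V,
    (∀ w, (B w).Nonempty) ∧
    (∀ w, (G.induce (B w)).Connected) ∧
    (∀ w w', w ≠ w' → Disjoint (B w) (B w')) ∧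
    (∀ w w', H.Adj w w' → ∃ a ∈ B w, ∃ b ∈ B w', G.Adj a b)

/-- Planarity via Wagner's theorem: no `K₅` and no `K₃,₃` minor. -/
def GraphIsPlanar {V : Type*} (G : SimpleGraph V) : Prop :=
  ¬ HasGraphMinor G (⊤ : SimpleGraph (Fin 5)) ∧
  ¬ HasGraphMinor G (completeBipartiteGraph (Fin 3) (Fin 3))

/-- `2`-connectedness: at least 3 vertices and deleting any single vertex leaves the
graph connected. -/
def TwoConnected {V : Type*} [Fintype V] (G : SimpleGraph V) : Prop :=
  3 ≤ Fintype.card V ∧ ∀ v : V, (G.induce {u | u ≠ v}).Connected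

/-- The triangular block `T₃`: outer triangle `0,1,2`, inner triangle `3,4,5`, and each
outer vertex `i` joined to the two inner vertices `3 + j` with `j ≠ i`. It is a planar
graph on 6 vertices with 12 edges, all of whose bounded faces are triangles. -/
def T3 : SimpleGraph (Fin 6) :=
  SimpleGraph.fromRel (fun a b =>
    (a, b) ∈ ([(0, 1), (0, 2), (1, 2), (3, 4), (3, 5), (4, 5),
      (0, 4), (0, 5), (1, 3), (1, 5), (2, 3), (2, 4)] : List (Fin 6 × Fin 6)))

open SimpleGraph Walk

/-- Gluing two internally disjoint paths into a cycle. -/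
lemma aux_append_isCycle {V : Type*} {G : SimpleGraph V} {a c : V} (hac : a ≠ c)
    (p : G.Walk a c) (q : G.Walk c a) (hp : p.IsPath) (hq : q.IsPath)
    (hint : ∀ v, v ∈ p.support → v ∈ q.support → v = a ∨ v = c)
    (hedge : s(a, c) ∉ q.edges) :
    (p.append q).IsCycle := by
  have hpa : p.support = a :: p.support.tail := p.support_eq_cons
  have hqc : q.support = c :: q.support.tail := q.support_eq_cons
  have hpnd := hp.support_nodup
  have hqnd := hq.support_nodup
  rw [hpa, List.nodup_cons] at hpnd
  rw [hqc, List.nodup_cons] at hqnd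
  refine ⟨⟨⟨?_⟩, ?_⟩, ?_⟩
  · rw [edges_append, List.nodup_append]
    refine ⟨hp.isTrail.edges_nodup, hq.isTrail.edges_nodup, fun e hep _ heq hee => ?_⟩
    subst hee
    induction e using Sym2.ind with
    | _ u v =>
      have hu : u = a ∨ u = c :=
        hint u (p.fst_mem_support_of_mem_edges hep) (q.fst_mem_support_of_mem_edges heq)
      have hv : v = a ∨ v = c :=
        hint v (p.snd_mem_support_of_mem_edges hep) (q.snd_mem_support_of_mem_edges heq)
      have huv : u ≠ v := (p.adj_of_mem_edges hep).ne
      rcases hu with rfl | rfl <;> rcases hv with rfl | rfl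
      · exact huv rfl
      · exact hedge heq
      · exact hedge (Sym2.eq_swap ▸ heq)
      · exact huv rfl
  · intro h
    have : p.length + q.length = 0 := by
      have := congrArg Walk.length h
      rwa [length_append] at this
    have hp0 : p.length = 0 := by omega
    exact hac ((nil_iff_length_eq.mpr hp0).eq)
  · rw [tail_support_append, List.nodup_append]
    refine ⟨hp.support_nodup.tail, hq.support_nodup.tail, fun v hvp _ hvq hvv => ?_⟩
    subst hvv
    have hvp' : v ∈ p.support := by rw [hpa]; exact List.mem_cons_of_mem _ hvp
    have hvq' : v ∈ q.support := by rw [hqc]; exact List.mem_cons_of_mem _ hvq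
    rcases hint v hvp' hvq' with rfl | rfl
    · exact hpnd.1 hvp
    · exact hqnd.1 hvq

/-- From a cycle through the two edges `ab`, `bc`, extract the path from `a` to `c`
avoiding `b`, of length two less. -/
lemma aux_cycle_path {V : Type*} [DecidableEq V] {G : SimpleGraph V} {x a b c : V}
    (W : G.Walk x x) (hW : W.IsCycle)
    (hab : a ≠ b) (hbc : b ≠ c) (hac : a ≠ c)
    (h1 : s(a, b) ∈ W.edges) (h2 : s(b, c) ∈ W.edges) :
    ∃ p : G.Walk a c, p.IsPath ∧ p.length + 2 = W.length ∧ b ∉ p.support ∧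
      ∀ v ∈ p.support, v ∈ W.support := by
  have hbW : b ∈ W.support := W.fst_mem_support_of_mem_edges h2
  set W' := W.rotate _ hbW with hW'def
  have hW' : W'.IsCycle := hW.rotate hbW
  have hrot := W.rotate_edges _ hbW
  have hsupW : ∀ v, v ∈ W'.support → v ∈ W.support := by
    intro v hv
    rw [W'.support_eq_cons, List.mem_cons] at hv
    rcases hv with rfl | hv
    · exact hbW
    · rw [(W.support_rotate _ hbW).mem_iff] at hv
      rw [W.support_eq_cons]
      exact List.mem_cons_of_mem _ hv
  have hlenW : W'.length = W.length := by
    rw [← length_edges, ← length_edges, hrot.perm.length_eq]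
  obtain ⟨x₀, h₁, q, hq⟩ := not_nil_iff.mp (fun h => hW'.ne_nil h.eq_nil)
  have hqnd : q.support.Nodup := by
    have := hW'.support_nodup
    rwa [hq, support_cons, List.tail_cons] at this
  obtain ⟨y, h₂', r, hr⟩ := not_nil_iff.mp (not_nil_of_ne (G.ne_of_adj h₁) : ¬ q.reverse.Nil)
  have hqsup : q.support.reverse = b :: r.support := by
    rw [← support_reverse, hr, support_cons]
  have hbr : b ∉ r.support ∧ r.support.Nodup := by
    have := hqnd
    rw [← List.nodup_reverse, hqsup, List.nodup_cons] at this
    exact this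
  have hqedges : q.edges.reverse = s(b, y) :: r.edges := by
    rw [← edges_reverse, hr, edges_cons]
  have key : ∀ z, z ≠ b → s(z, b) ∈ W'.edges → z = x₀ ∨ z = y := by
    intro z hz hmem
    rw [hq, edges_cons, List.mem_cons] at hmem
    rcases hmem with hzb | hmem
    · rw [Sym2.eq_iff] at hzb
      rcases hzb with ⟨rfl, _⟩ | ⟨rfl, _⟩
      · exact absurd rfl hz
      · exact Or.inl rfl
    · rw [← List.mem_reverse, hqedges, List.mem_cons] at hmem
      rcases hmem with hzb | hmem
      · rw [Sym2.eq_iff] at hzb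
        rcases hzb with ⟨rfl, _⟩ | ⟨hzy, _⟩
        · exact absurd rfl hz
        · exact Or.inr hzy
      · exact absurd (r.snd_mem_support_of_mem_edges hmem) hbr.1
  have ha : a = x₀ ∨ a = y := key a hab (hrot.mem_iff.mpr h1)
  have hc : c = x₀ ∨ c = y :=
    key c (Ne.symm hbc) (hrot.mem_iff.mpr (Sym2.eq_swap ▸ h2))
  have hlens : r.length + 2 = W.length := by
    have h1' : W'.length = q.length + 1 := by rw [hq, length_cons]
    have h2' : q.length = r.length + 1 := by
      rw [← length_reverse q, hr, length_cons]
    omega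
  have hrsub : ∀ v, v ∈ r.support → v ∈ W.support := by
    intro v hv
    apply hsupW
    rw [hq, support_cons, List.mem_cons]
    right
    rw [← List.mem_reverse, hqsup]
    exact List.mem_cons_of_mem _ hv
  rcases ha with rfl | rfl <;> rcases hc with rfl | rfl
  · exact absurd rfl hac
  · exact ⟨r.reverse, IsPath.mk' (by rw [support_reverse]; exact List.nodup_reverse.mpr hbr.2),
      by rw [length_reverse]; exact hlens,
      by rw [support_reverse, List.mem_reverse]; exact hbr.1,
      fun v hv => hrsub v (by rwa [support_reverse, List.mem_reverse] at hv)⟩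
  · exact ⟨r, IsPath.mk' hbr.2, hlens, hbr.1, hrsub⟩
  · exact absurd rfl hac

instance : DecidableRel T3.Adj :=
  fun a b => decidable_of_iff _ (SimpleGraph.fromRel_adj _ a b).symm

/-- Path `2-3-4-0` of length 3 in `T3`. -/
def auxQ3 : T3.Walk 2 0 :=
  .cons (show T3.Adj 2 3 by decide) (.cons (show T3.Adj 3 4 by decide)
    (.cons (show T3.Adj 4 0 by decide) .nil))

/-- Path `2-3-5-4-0` of length 4 in `T3`. -/
def auxQ4 : T3.Walk 2 0 :=
  .cons (show T3.Adj 2 3 by decide) (.cons (show T3.Adj 3 5 by decide)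
    (.cons (show T3.Adj 5 4 by decide) (.cons (show T3.Adj 4 0 by decide) .nil)))

/-- Path `2-3-1-5-4-0` of length 5 in `T3`. -/
def auxQ5 : T3.Walk 2 0 :=
  .cons (show T3.Adj 2 3 by decide) (.cons (show T3.Adj 3 1 by decide)
    (.cons (show T3.Adj 1 5 by decide) (.cons (show T3.Adj 5 4 by decide)
      (.cons (show T3.Adj 4 0 by decide) .nil))))

lemma aux_finish {V : Type*} {G : SimpleGraph V}
    (φ : T3 →g G) (hφ : Function.Injective φ)
    {x : V} {W : G.Walk x x}
    (havoid : ∀ u : Fin 6, φ u ∈ W.support → u = 0 ∨ u = 1 ∨ u = 2)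
    (p : G.Walk (φ 0) (φ 2)) (hp : p.IsPath) (hbp : φ 1 ∉ p.support)
    (hpsub : ∀ v ∈ p.support, v ∈ W.support)
    (Q : T3.Walk 2 0) (hQ : Q.IsPath) (hQe : s((2 : Fin 6), (0 : Fin 6)) ∉ Q.edges)
    (hlen : p.length + Q.length = 7) :
    ∃ (u : V) (w : G.Walk u u), w.IsCycle ∧ w.length = 7 := by
  refine ⟨φ 0, p.append (Q.map (φ : T3 →g G)), ?_, ?_⟩
  · apply aux_append_isCycle (hφ.ne (by decide)) _ _ hp
      (Walk.map_isPath_of_injective hφ hQ)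
    · intro v hvp hvq
      rw [Walk.support_map, List.mem_map] at hvq
      obtain ⟨u, huQ, rfl⟩ := hvq
      rcases havoid u (hpsub _ hvp) with rfl | rfl | rfl
      · exact Or.inl rfl
      · exact absurd hvp hbp
      · exact Or.inr rfl
    · intro hmem
      rw [edges_map, List.mem_map] at hmem
      obtain ⟨e, heQ, he⟩ := hmem
      have : e = s((2 : Fin 6), (0 : Fin 6)) := by
        apply Sym2.map.injective hφ
        rw [he, Sym2.map_pair_eq]
        exact Sym2.eq_swap
      exact hQe (this ▸ heQ)
  · rw [length_append, length_map]
    exact hlen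

/-- Let `G` be a `2`-connected, `C₇`-free planar graph containing a
copy of `T₃` (via an injective homomorphism `φ`) with outer boundary triangle
`φ 0, φ 1, φ 2`, and suppose `G` is not isomorphic to `T₃`. If a face `f` of the
embedding — a cycle `W` of `G` whose only `T₃`-vertices are among `φ 0, φ 1, φ 2` —
shares the two boundary edges `φ 0 φ 1` and `φ 1 φ 2` with the `T₃` and has length `m`
with `4 ≤ m ≤ 7`, then `G` contains a cycle of length 7. -/
theorem T3_small_face_gives_C7 {V : Type*} [Fintype V] (G : SimpleGraph V)
    (hplanar : GraphIsPlanar G) (h2con : TwoConnected G)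
    (hC7free : ∀ (u : V) (w : G.Walk u u), w.IsCycle → w.length ≠ 7)
    (φ : T3 →g G) (hφ : Function.Injective φ)
    (hne : ¬ Nonempty (G ≃g T3))
    {x : V} (W : G.Walk x x) (hW : W.IsCycle)
    (hm4 : 4 ≤ W.length) (hm7 : W.length ≤ 7)
    (hab : s(φ 0, φ 1) ∈ W.edges) (hbc : s(φ 1, φ 2) ∈ W.edges)
    (havoid : ∀ u : Fin 6, φ u ∈ W.support → u = 0 ∨ u = 1 ∨ u = 2) :
    ∃ (u : V) (w : G.Walk u u), w.IsCycle ∧ w.length = 7 := by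
  classical
  rcases eq_or_ne W.length 7 with h7 | h7
  · exact ⟨x, W, hW, h7⟩
  obtain ⟨p, hp, hplen, hbp, hpsub⟩ :=
    aux_cycle_path W hW (hφ.ne (by decide)) (hφ.ne (by decide)) (hφ.ne (by decide)) hab hbc
  have hcases : p.length = 2 ∨ p.length = 3 ∨ p.length = 4 := by omega
  rcases hcases with h | h | h
  · exact aux_finish φ hφ havoid p hp hbp hpsub auxQ5 (IsPath.mk' (by decide))
      (by decide) (by rw [h]; rfl)
  · exact aux_finish φ hφ havoid p hp hbp hpsub auxQ4 (IsPath.mk' (by decide))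
      (by decide) (by rw [h]; rfl)
  · exact aux_finish φ hφ havoid p hp hbp hpsub auxQ3 (IsPath.mk' (by decide))
      (by decide) (by rw [h]; rfl)
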